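/- Let P be a totally ordered set, V a pointwise finite dimensional persistence module indexed by P, z ∈ P, v ∈ V_z, and I = {x ∈ P | x ≤ z and V_{x,z}^{-1}(v) ≠ ∅}. Then there exists a family (u_x)_{x ∈ I} with u_x ∈ V_x such that V_{x,z}(u_x) = v for all x ∈ I, and V_{x,y}(u_x) = u_y for all x, y ∈ I with x ≤ y. -/

import Mathlib

universe u v w w'

/-- A persistence module indexed by a poset `P`, over a field `k`. -/
structure PersMod (k : Type u) [Field k] (P : Type v) [PartialOrder P] :
    Type (max u v (w + 1)) where
  space : P → Type w
  [acg : ∀ x, AddCommGroup (space x)]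
  [mod : ∀ x, Module k (space x)]
  map : ∀ {x y : P}, x ≤ y → (space x →ₗ[k] space y)
  map_id : ∀ x : P, map (le_refl x) = LinearMap.id
  map_comp : ∀ {x y z : P} (hxy : x ≤ y) (hyz : y ≤ z),
    (map hyz).comp (map hxy) = map (hxy.trans hyz)

attribute [instance] PersMod.acg PersMod.mod

variable (k : Type u) [Field k] {P : Type v} [PartialOrder P]

/-- A morphism of persistence modules (a natural transformation). -/
structure PersHom (V : PersMod.{u, v, w} k P) (W : PersMod.{u, v, w'} k P) where
  app : ∀ x : P, V.space x →ₗ[k] W.space x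
  natural : ∀ {x y : P} (h : x ≤ y) (v : V.space x),
    app y (V.map h v) = W.map h (app x v)

/-- An isomorphism of persistence modules. -/
structure PersIso (V : PersMod.{u, v, w} k P) (W : PersMod.{u, v, w'} k P) where
  app : ∀ x : P, V.space x ≃ₗ[k] W.space x
  natural : ∀ {x y : P} (h : x ≤ y) (v : V.space x),
    app y (V.map h v) = W.map h (app x v)

/-- A subset `I` of a poset is convex if `x ≤ y ≤ z`, `x ∈ I`, `z ∈ I` imply `y ∈ I`. -/
def IsConvexIn (I : Set P) : Prop :=
  ∀ ⦃x y z : P⦄, x ∈ I → z ∈ I → x ≤ y → y ≤ z → y ∈ I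

/-- A subset `I` of a poset is connected if any two points of `I` are joined by a
zigzag path inside `I`. -/
def IsConnectedIn (I : Set P) : Prop :=
  ∀ x ∈ I, ∀ z ∈ I, ∃ (n : ℕ) (c : ℕ → P), (∀ i ≤ n, c i ∈ I) ∧ c 0 = x ∧ c n = z ∧
    ∀ i < n, c i ≤ c (i + 1) ∨ c (i + 1) ≤ c i

/-- An interval in a poset: nonempty, convex and connected. -/
def IsPosetInterval (I : Set P) : Prop :=
  I.Nonempty ∧ IsConvexIn I ∧ IsConnectedIn I

open Classical in
/-- The subspace of `k` used as the value of the constant module at `x`. -/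
noncomputable def constSub (I : Set P) (x : P) : Submodule k k :=
  if x ∈ I then ⊤ else ⊥

open Classical in
/-- The structure map of the constant module. -/
noncomputable def constMap (I : Set P) (x y : P) :
    constSub k I x →ₗ[k] constSub k I y :=
  LinearMap.codRestrict (constSub k I y)
    ((if y ∈ I then (LinearMap.id : k →ₗ[k] k) else 0).comp (constSub k I x).subtype)
    (fun c => by
      by_cases hy : y ∈ I
      · simp [constSub, hy]
      · rw [if_neg hy, LinearMap.zero_comp, LinearMap.zero_apply]
        exact Submodule.zero_mem _)

open Classical in
/-- The constant (interval) module `M(I)` attached to a convex subset `I`. -/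
noncomputable def constMod (I : Set P) (hI : IsConvexIn I) : PersMod.{u, v, u} k P where
  space x := constSub k I x
  map {x y} _ := constMap k I x y
  map_id := fun x => by
    ext c
    by_cases hx : x ∈ I
    · simp [constMap, hx]
    · have hc : (c : k) = 0 := by
        have := c.2
        change (c : k) ∈ (if x ∈ I then ⊤ else ⊥ : Submodule k k) at this
        rw [if_neg hx] at this
        exact (Submodule.mem_bot k).mp this
      simp [constMap, hx, hc]
  map_comp := fun {x y z} hxy hyz => by
    ext c
    by_cases hz : z ∈ I
    · by_cases hy : y ∈ I
      · simp [constMap, hy, hz]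
      · have hx : x ∉ I := fun hx => hy (hI hx hz hxy hyz)
        have hc : (c : k) = 0 := by
          have := c.2
          change (c : k) ∈ (if x ∈ I then ⊤ else ⊥ : Submodule k k) at this
          rw [if_neg hx] at this
          exact (Submodule.mem_bot k).mp this
        simp [constMap, hy, hz, hc]
    · simp [constMap, hz]

/-- A submodule of a persistence module: a family of subspaces preserved by the
structure maps. -/
structure PersSubmod (V : PersMod.{u, v, w} k P) where
  carrier : ∀ x : P, Submodule k (V.space x)
  mapLe : ∀ {x y : P} (h : x ≤ y), ∀ v ∈ carrier x, V.map h v ∈ carrier y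

/-- A submodule of a persistence module, viewed as a persistence module in its own
right. -/
def PersSubmod.toPersMod {V : PersMod.{u, v, w} k P} (U : PersSubmod k V) :
    PersMod.{u, v, w} k P where
  space x := U.carrier x
  map {x y} h := (V.map h).restrict (U.mapLe h)
  map_id := fun x => by
    ext c
    simp [LinearMap.restrict_apply, V.map_id]
  map_comp := fun {x y z} hxy hyz => by
    ext c
    have := LinearMap.congr_fun (V.map_comp hxy hyz) (c : V.space x)
    simpa [LinearMap.restrict_apply] using this

/-- A persistence module is an interval module if it is isomorphic to a constant
module `M(I)` for some interval `I`. -/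
def IsIntervalModule (V : PersMod.{u, v, w} k P) : Prop :=
  ∃ (I : Set P) (hI : IsPosetInterval I), Nonempty (PersIso k V (constMod k I hI.2.1))

/-- `A` is an internal direct sum decomposition of `V`:
at each point the subspaces are independent and span everything. -/
def IsDecomp (V : PersMod.{u, v, w} k P) (A : Set (PersSubmod k V)) : Prop :=
  ∀ x : P, iSupIndep (fun U : A => (U : PersSubmod k V).carrier x) ∧
    ⨆ U : A, (U : PersSubmod k V).carrier x = ⊤

/-- An interval decomposition of `V`. -/
def IsIntervalDecomp (V : PersMod.{u, v, w} k P) (A : Set (PersSubmod k V)) : Prop :=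
  IsDecomp k V A ∧ ∀ U ∈ A, IsIntervalModule k U.toPersMod

/-- `V` has an interval decomposition. -/
def HasIntervalDecomp (V : PersMod.{u, v, w} k P) : Prop :=
  ∃ A : Set (PersSubmod k V), IsIntervalDecomp k V A


section InverseLimitAux

variable {k}

/-- Fiber of a linear map over a point, as an affine subspace. -/
def fiberA {M N : Type*} [AddCommGroup M] [Module k M] [AddCommGroup N] [Module k N]
    (f : M →ₗ[k] N) (w : N) : AffineSubspace k M where
  carrier := {u | f u = w}
  smul_vsub_vadd_mem' c p₁ p₂ p₃ h₁ h₂ h₃ := by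
    simp only [Set.mem_setOf_eq] at *
    simp [vsub_eq_sub, vadd_eq_add, map_add, map_smul, map_sub, h₁, h₂, h₃]

lemma mem_fiberA {M N : Type*} [AddCommGroup M] [Module k M] [AddCommGroup N] [Module k N]
    {f : M →ₗ[k] N} {w : N} {u : M} : u ∈ fiberA f w ↔ f u = w := Iff.rfl

/-- A chain of nonempty affine subspaces of a finite-dimensional space has a least element. -/
lemma chain_min {W : Type*} [AddCommGroup W] [Module k W] [FiniteDimensional k W]
    {ι : Type*} [Nonempty ι] (A : ι → AffineSubspace k W)
    (hne : ∀ i, (A i : Set W).Nonempty)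
    (hchain : ∀ i j, A i ≤ A j ∨ A j ≤ A i) :
    ∃ i, ∀ j, A i ≤ A j := by
  have hr : (Set.range fun i => Module.finrank k (A i).direction).Nonempty :=
    Set.range_nonempty _
  obtain ⟨i, hi⟩ := Nat.sInf_mem hr
  refine ⟨i, fun j => ?_⟩
  rcases hchain i j with h | h
  · exact h
  · have hd : (A j).direction ≤ (A i).direction := AffineSubspace.direction_le h
    have hfin : Module.finrank k ((A i).direction) ≤ Module.finrank k ((A j).direction) := by
      rw [show Module.finrank k ((A i).direction) = _ from hi]
      exact Nat.sInf_le ⟨j, rfl⟩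
    have hde : (A j).direction = (A i).direction := Submodule.eq_of_le_of_finrank_le hd hfin
    have heq : A j = A i := AffineSubspace.ext_of_direction_eq hde
      (by obtain ⟨x, hx⟩ := hne j; exact ⟨x, hx, h hx⟩)
    exact le_of_eq heq.symm

variable {Q : Type v} [LinearOrder Q] (V : PersMod.{u, v, w} k Q) (z : Q) (v : V.space z)

/-- The image in `V_x` of the fiber of `v` over `y`, as an affine subspace;
`⊥` when the constraints `y ≤ x`, `y ≤ z` fail. -/
noncomputable def Aaux (y x : Q) : AffineSubspace k (V.space x) :=
  if h : y ≤ x ∧ y ≤ z then (fiberA (V.map h.2) v).map (V.map h.1).toAffineMap else ⊥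

lemma mem_Aaux {y x : Q} (h1 : y ≤ x) (h2 : y ≤ z) {u : V.space x} :
    u ∈ Aaux V z v y x ↔ ∃ s, V.map h2 s = v ∧ V.map h1 s = u := by
  rw [Aaux, dif_pos ⟨h1, h2⟩]
  simp only [AffineSubspace.mem_map, mem_fiberA, LinearMap.coe_toAffineMap]

lemma Aaux_nonempty {y x : Q} (h1 : y ≤ x) (h2 : y ≤ z) (hw : ∃ w, V.map h2 w = v) :
    (Aaux V z v y x : Set (V.space x)).Nonempty := by
  obtain ⟨w, hw⟩ := hw
  exact ⟨V.map h1 w, (mem_Aaux V z v h1 h2).2 ⟨w, hw, rfl⟩⟩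

lemma map_map_eq (V' : PersMod.{u, v, w} k Q) {x y zz : Q} (hxy : x ≤ y) (hyz : y ≤ zz)
    (s : V'.space x) : V'.map hyz (V'.map hxy s) = V'.map (hxy.trans hyz) s := by
  have := LinearMap.congr_fun (V'.map_comp hxy hyz) s
  simpa using this

lemma Aaux_mono {y' y x : Q} (h : y' ≤ y) (h1 : y ≤ x) (h2 : y ≤ z)
    (h1' : y' ≤ x) (h2' : y' ≤ z) :
    Aaux V z v y' x ≤ Aaux V z v y x := by
  intro u hu
  rw [mem_Aaux V z v h1' h2'] at hu
  obtain ⟨s, hs1, hs2⟩ := hu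
  rw [mem_Aaux V z v h1 h2]
  refine ⟨V.map h s, ?_, ?_⟩
  · rw [map_map_eq V h h2 s]; exact hs1
  · rw [map_map_eq V h h1 s]; exact hs2

lemma Aaux_push {y x x' : Q} (h1 : y ≤ x) (h2 : y ≤ z) (hxx' : x ≤ x') {u : V.space x}
    (hu : u ∈ Aaux V z v y x) : V.map hxx' u ∈ Aaux V z v y x' := by
  rw [mem_Aaux V z v h1 h2] at hu
  obtain ⟨s, hs1, hs2⟩ := hu
  rw [mem_Aaux V z v (h1.trans hxx') h2]
  exact ⟨s, hs1, by rw [← hs2, map_map_eq V h1 hxx' s]⟩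

lemma Aaux_pull {y x x' : Q} (h1 : y ≤ x) (h2 : y ≤ z) (hxx' : x ≤ x') {b : V.space x'}
    (hb : b ∈ Aaux V z v y x') : ∃ u ∈ Aaux V z v y x, V.map hxx' u = b := by
  rw [mem_Aaux V z v (h1.trans hxx') h2] at hb
  obtain ⟨s, hs1, hs2⟩ := hb
  refine ⟨V.map h1 s, (mem_Aaux V z v h1 h2).2 ⟨s, hs1, rfl⟩, ?_⟩
  rw [map_map_eq V h1 hxx' s]; exact hs2

/-- Membership predicate for the interval `I`. -/
def MI (x : Q) : Prop := ∃ hxz : x ≤ z, ∃ w, V.map hxz w = v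

/-- The intersection of all the affine subspaces `Aaux y x`. -/
def Bset (x : Q) : Set (V.space x) :=
  {u | ∀ y (h1 : y ≤ x) (h2 : y ≤ z), (∃ w, V.map h2 w = v) → u ∈ Aaux V z v y x}

lemma Bset_push {x x' : Q} (hx : MI V z v x) (hx' : x ≤ x') {u : V.space x}
    (hu : u ∈ Bset V z v x) : V.map hx' u ∈ Bset V z v x' := by
  intro y h1 h2 hey
  rcases le_total y x with hyx | hxy
  · exact Aaux_push V z v hyx h2 hx' (hu y hyx h2 hey)
  · obtain ⟨hxz, hwx⟩ := hx
    have hxx : u ∈ Aaux V z v x x := hu x le_rfl hxz ⟨hwx.choose, hwx.choose_spec⟩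
    exact Aaux_mono V z v hxy h1 h2 hx' hxz (Aaux_push V z v le_rfl hxz hx' hxx)

lemma Bset_fiber {x : Q} (hxz : x ≤ z) (hex : ∃ w, V.map hxz w = v) {u : V.space x}
    (hu : u ∈ Bset V z v x) : V.map hxz u = v := by
  have h := hu x le_rfl hxz hex
  rw [mem_Aaux V z v le_rfl hxz] at h
  obtain ⟨s, hs1, hs2⟩ := h
  rw [V.map_id] at hs2
  simp only [LinearMap.id_coe, id_eq] at hs2
  rw [← hs2]; exact hs1

end InverseLimitAux

/-- Inverse-limit lemma: let `P` be totally ordered, `V` pointwise finite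
dimensional, `z ∈ P`, `v ∈ V_z`, and let `I = {x ≤ z | V_{x,z}⁻¹(v) ≠ ∅}`.  Then
there is a compatible family `(u_x)_{x ∈ I}` of preimages of `v`. -/
theorem exists_compatible_preimage_family (P : Type v) [LinearOrder P]
    (V : PersMod.{u, v, w} k P) (hfd : ∀ x : P, FiniteDimensional k (V.space x))
    (z : P) (v : V.space z) :
    ∃ u : ∀ x : P, V.space x,
      (∀ (x : P) (hxz : x ≤ z), (∃ w, V.map hxz w = v) → V.map hxz (u x) = v) ∧
      (∀ (x y : P) (hxy : x ≤ y) (hyz : y ≤ z),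
        (∃ w, V.map (hxy.trans hyz) w = v) → (∃ w, V.map hyz w = v) →
        V.map hxy (u x) = u y) := by
  classical
  -- for each `x ∈ I`, a minimal member of the chain of affine subspaces `Aaux · x`
  have hmin : ∀ x, MI V z v x → ∃ m, (m ≤ x ∧ MI V z v m) ∧
      ∀ y (h1 : y ≤ x) (h2 : y ≤ z), (∃ w, V.map h2 w = v) →
        Aaux V z v m x ≤ Aaux V z v y x := by
    intro x hx
    haveI := hfd x
    haveI : Nonempty {y : P // y ≤ x ∧ MI V z v y} := ⟨⟨x, le_rfl, hx⟩⟩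
    obtain ⟨i, hi⟩ := chain_min (fun i : {y : P // y ≤ x ∧ MI V z v y} => Aaux V z v i.1 x)
      (fun i => Aaux_nonempty V z v i.2.1 i.2.2.choose i.2.2.choose_spec)
      (fun i j => by
        rcases le_total i.1 j.1 with hij | hji
        · exact Or.inl (Aaux_mono V z v hij j.2.1 j.2.2.choose i.2.1 i.2.2.choose)
        · exact Or.inr (Aaux_mono V z v hji i.2.1 i.2.2.choose j.2.1 j.2.2.choose))
    exact ⟨i.1, i.2, fun y h1 h2 hey => hi ⟨y, h1, h2, hey⟩⟩
  -- Zorn's lemma on partial compatible sections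
  set S : Set (Set (Σ x : P, V.space x)) :=
    {s | (∀ p ∈ s, MI V z v p.1 ∧ p.2 ∈ Bset V z v p.1) ∧
         (∀ p ∈ s, ∀ q ∈ s, ∀ h : p.1 ≤ q.1, V.map h p.2 = q.2) ∧
         (∀ p ∈ s, ∀ y, MI V z v y → ∀ h : p.1 ≤ y,
            (⟨y, V.map h p.2⟩ : Σ x : P, V.space x) ∈ s)} with hSdef
  obtain ⟨M, hMS, hMmax⟩ := zorn_subset S (by
    intro c hcS hchain
    refine ⟨⋃₀ c, ⟨?_, ?_, ?_⟩, fun s hs => Set.subset_sUnion_of_mem hs⟩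
    · rintro p ⟨s, hs, hp⟩
      exact (hcS hs).1 p hp
    · rintro p ⟨s, hs, hp⟩ q ⟨t, ht, hq⟩ h
      rcases hchain.total hs ht with hst | hts
      · exact (hcS ht).2.1 p (hst hp) q hq h
      · exact (hcS hs).2.1 p hp q (hts hq) h
    · rintro p ⟨s, hs, hp⟩ y hy h
      exact ⟨s, hs, (hcS hs).2.2 p hp y hy h⟩)
  -- the maximal section is defined on all of `I`
  have hdom : ∀ a, MI V z v a → ∃ w, (⟨a, w⟩ : Σ x : P, V.space x) ∈ M := by
    by_contra hcon
    push_neg at hcon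
    obtain ⟨a, ha, hna⟩ := hcon
    have hup : ∀ p, p ∈ M → a ≤ p.1 := by
      intro p hp
      rcases le_total p.1 a with h | h
      · exact absurd (hMS.2.2 p hp a ha h) (hna _)
      · exact h
    obtain ⟨m, ⟨hma, hmI⟩, hmmin⟩ := hmin a ha
    have hmz : m ≤ z := hmI.choose
    have hmw : ∃ w, V.map hmz w = v := hmI.choose_spec
    haveI := hfd a
    set F : Option {p : (Σ x : P, V.space x) // p ∈ M} → AffineSubspace k (V.space a) :=
      fun o => o.elim (Aaux V z v m a)
        (fun p => Aaux V z v m a ⊓ fiberA (V.map (hup p.1 p.2)) p.1.2) with hF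
    have hFle : ∀ o, F o ≤ F none := by
      rintro (_ | p)
      · exact le_rfl
      · exact inf_le_left
    have hFmono : ∀ p q : {p : (Σ x : P, V.space x) // p ∈ M}, p.1.1 ≤ q.1.1 →
        F (some p) ≤ F (some q) := by
      intro p q h u hu
      simp only [hF, Option.elim, SetLike.mem_coe, AffineSubspace.mem_inf_iff,
        mem_fiberA] at hu ⊢
      refine ⟨hu.1, ?_⟩
      have key : V.map (hup q.1 q.2) u = V.map h (V.map (hup p.1 p.2) u) :=
        (map_map_eq V (hup p.1 p.2) h u).symm
      rw [key, hu.2]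
      exact hMS.2.1 p.1 p.2 q.1 q.2 h
    have hFne : ∀ o, (F o : Set (V.space a)).Nonempty := by
      rintro (_ | p)
      · exact Aaux_nonempty V z v hma hmz hmw
      · have hpI : MI V z v p.1.1 := (hMS.1 p.1 p.2).1
        have hpB : p.1.2 ∈ Bset V z v p.1.1 := (hMS.1 p.1 p.2).2
        obtain ⟨m', ⟨hm'x, hm'I⟩, _⟩ := hmin p.1.1 hpI
        have h2 : ∃ y₂, MI V z v y₂ ∧ y₂ ≤ m ∧ y₂ ≤ m' := by
          rcases le_total m m' with h | h
          exacts [⟨m, hmI, le_rfl, h⟩, ⟨m', hm'I, h, le_rfl⟩]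
        obtain ⟨y₂, hy₂I, hy₂m, hy₂m'⟩ := h2
        have hy₂z : y₂ ≤ z := hy₂I.choose
        have hy₂w : ∃ w, V.map hy₂z w = v := hy₂I.choose_spec
        have hy₂a : y₂ ≤ a := hy₂m.trans hma
        have hb : p.1.2 ∈ Aaux V z v y₂ p.1.1 := hpB y₂ (hy₂m'.trans hm'x) hy₂z hy₂w
        obtain ⟨u, huA, hu⟩ := Aaux_pull V z v hy₂a hy₂z (hup p.1 p.2) hb
        have huM : u ∈ Aaux V z v m a := Aaux_mono V z v hy₂m hma hmz hy₂a hy₂z huA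
        exact ⟨u, (AffineSubspace.mem_inf_iff u _ _).2 ⟨huM, hu⟩⟩
    have hFchain : ∀ o o', F o ≤ F o' ∨ F o' ≤ F o := by
      rintro (_ | p) o'
      · exact Or.inr (hFle o')
      · rcases o' with _ | q
        · exact Or.inl (hFle _)
        · rcases le_total p.1.1 q.1.1 with h | h
          · exact Or.inl (hFmono p q h)
          · exact Or.inr (hFmono q p h)
    obtain ⟨o₀, ho₀⟩ := chain_min F hFne hFchain
    obtain ⟨ua, hua⟩ := hFne o₀
    have huaall : ∀ o, ua ∈ F o := fun o => ho₀ o hua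
    have huaA : ua ∈ Aaux V z v m a := huaall none
    have huaB : ua ∈ Bset V z v a := fun y h1 h2 hey => hmmin y h1 h2 hey huaA
    have huaM : ∀ p, (hp : p ∈ M) → V.map (hup p hp) ua = p.2 := by
      intro p hp
      have h := huaall (some ⟨p, hp⟩)
      exact ((AffineSubspace.mem_inf_iff ua _ _).1 h).2
    -- extend the section by `ua` and everything above `a`
    set M' : Set (Σ x : P, V.space x) :=
      M ∪ {q | ∃ h : a ≤ q.1, MI V z v q.1 ∧ q.2 = V.map h ua} with hM'def
    have hM'S : M' ∈ S := by
      refine ⟨?_, ?_, ?_⟩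
      · rintro p (hp | ⟨h, hq, hqe⟩)
        · exact hMS.1 p hp
        · exact ⟨hq, by rw [hqe]; exact Bset_push V z v ha h huaB⟩
      · rintro p (hp | ⟨hpa, hpI, hpe⟩) q (hq | ⟨hqa, hqI, hqe⟩) h
        · exact hMS.2.1 p hp q hq h
        · rw [hqe, ← huaM p hp, map_map_eq V (hup p hp) h ua]
        · rw [hpe, map_map_eq V hpa h ua]
          exact huaM q hq
        · rw [hpe, hqe, map_map_eq V hpa h ua]
      · rintro p (hp | ⟨hpa, hpI, hpe⟩) y hy h
        · exact Or.inl (hMS.2.2 p hp y hy h)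
        · exact Or.inr ⟨hpa.trans h, hy, by rw [hpe, map_map_eq V hpa h ua]⟩
    have hmem : (⟨a, V.map le_rfl ua⟩ : Σ x : P, V.space x) ∈ M' :=
      Or.inr ⟨le_rfl, ha, rfl⟩
    exact hna _ (hMmax hM'S Set.subset_union_left hmem)
  choose! w hw using hdom
  refine ⟨w, ?_, ?_⟩
  · intro x hxz hex
    exact Bset_fiber V z v hxz hex (hMS.1 _ (hw x ⟨hxz, hex⟩)).2
  · intro x y hxy hyz hex hey
    exact hMS.2.1 ⟨x, w x⟩ (hw x ⟨hxy.trans hyz, hex⟩) ⟨y, w y⟩ (hw y ⟨hyz, hey⟩) hxy
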